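/- Let α₂, α₁, β ∈ ℚ and let (uₙ)_{n≥0} satisfy (n+1)²·u_{n+1} + (α₂n² + α₂n − β)·uₙ + α₁n²·u_{n−1} = 0 for all n ≥ 0 (with u_{−1} = 0). Define the sequence (vₘ)_{m≥0} by v_{2n} = C(2n, n)·uₙ and v_{2n+1} = 0, where C(2n,n) is the central binomial coefficient. Then for every m ≥ 0: (m+1)³·v_{m+1} + 4m(α₂m² − 4β − α₂)·v_{m−1} + 16·α₁·m(m−1)(m−2)·v_{m−3} = 0 (with vₖ = 0 for k < 0). Equivalently, the formal power series Σₘ vₘtᵐ is annihilated by the D3 operator with parameters (α₃, α₂, α₁, α₀) = (0, 4α₂, 0, 16α₁) and (β₁, β₀) = (0, −16β − 4α₂). -/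

import Mathlib

open PowerSeries

/-- The Euler operator `D = t·d/dt` on formal power series: `D(tⁿ) = n·tⁿ`. -/
noncomputable def eulerD {K : Type*} [Semiring K] (f : PowerSeries K) : PowerSeries K :=
  PowerSeries.mk fun n => (n : K) * PowerSeries.coeff n f

/-- The operator `D + c`. -/
noncomputable def eulerDplus {K : Type*} [Semiring K] (c : K) (f : PowerSeries K) :
    PowerSeries K :=
  eulerD f + C c * f

/-- The D3 operator
`D³ + t(D + 1/2)(α₃(D² + D) + β₁) + t²(D+1)(α₂(D+1)² + β₀)
  + α₁t³(D+2)(D + 3/2)(D+1) + α₀t⁴(D+3)(D+2)(D+1)`. -/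
noncomputable def D3op {K : Type*} [Field K] (α₃ α₂ α₁ α₀ β₁ β₀ : K) (φ : PowerSeries K) :
    PowerSeries K :=
  eulerD (eulerD (eulerD φ))
    + X * eulerDplus (1 / 2) (C α₃ * (eulerD (eulerD φ) + eulerD φ) + C β₁ * φ)
    + X ^ 2 * eulerDplus 1 (C α₂ * eulerDplus 1 (eulerDplus 1 φ) + C β₀ * φ)
    + C α₁ * X ^ 3 * eulerDplus 2 (eulerDplus (3 / 2) (eulerDplus 1 φ))
    + C α₀ * X ^ 4 * eulerDplus 3 (eulerDplus 2 (eulerDplus 1 φ))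

lemma eulerDplus_zero' {K : Type*} [Semiring K] (c : K) : eulerDplus c 0 = 0 := by
  ext n; simp [eulerDplus, eulerD]

/-- Coefficient `m+1` of the D3 operator with `α₃ = α₁ = β₁ = 0`. -/
lemma coeff_D3op_succ (a b b0 : ℚ) (w : ℕ → ℚ) (m : ℕ) :
    PowerSeries.coeff (m + 1) (D3op 0 a 0 b 0 b0 (PowerSeries.mk w)) =
      ((m : ℚ) + 1) ^ 3 * w (m + 1)
      + (m : ℚ) * (a * (m : ℚ) ^ 2 + b0) * (if 1 ≤ m then w (m - 1) else 0)
      + b * (m : ℚ) * ((m : ℚ) - 1) * ((m : ℚ) - 2) * (if 3 ≤ m then w (m - 3) else 0) := by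
  simp only [D3op, map_zero, zero_mul, zero_add, add_zero, mul_zero,
    eulerDplus_zero', mul_assoc, map_add, map_mul, coeff_C_mul]
  simp only [eulerDplus, eulerD, map_add, coeff_mk, coeff_C_mul, coeff_X_pow_mul']
  have e2 : m + 1 - 2 = m - 1 := rfl
  have e4 : m + 1 - 4 = m - 3 := rfl
  rw [e2, e4]
  split_ifs with h1 h2 h3 h4 h5 h6 <;> try omega
  · rw [Nat.cast_sub (by omega : 1 ≤ m), Nat.cast_sub (by omega : 3 ≤ m)]
    push_cast; ring
  · rw [Nat.cast_sub (by omega : 1 ≤ m)]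
    push_cast; ring
  · push_cast; ring

theorem stmt_14 (α₂ α₁ β : ℚ) (u : ℕ → ℚ)
    (hrec : ∀ n : ℕ, ((n : ℚ) + 1) ^ 2 * u (n + 1) + (α₂ * n ^ 2 + α₂ * n - β) * u n
      + α₁ * n ^ 2 * (if 1 ≤ n then u (n - 1) else 0) = 0)
    (v : ℕ → ℚ)
    (hveven : ∀ n : ℕ, v (2 * n) = (Nat.choose (2 * n) n : ℚ) * u n)
    (hvodd : ∀ n : ℕ, v (2 * n + 1) = 0) :
    (∀ m : ℕ, ((m : ℚ) + 1) ^ 3 * v (m + 1)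
      + 4 * (m : ℚ) * (α₂ * m ^ 2 - 4 * β - α₂) * (if 1 ≤ m then v (m - 1) else 0)
      + 16 * α₁ * (m : ℚ) * ((m : ℚ) - 1) * ((m : ℚ) - 2)
        * (if 3 ≤ m then v (m - 3) else 0) = 0) ∧
    D3op 0 (4 * α₂) 0 (16 * α₁) 0 (-16 * β - 4 * α₂) (PowerSeries.mk v) = 0 := by
  have hcb : ∀ n : ℕ, ((n : ℚ) + 1) * ((2 * (n + 1)).choose (n + 1) : ℚ)
      = 2 * (2 * (n : ℚ) + 1) * ((2 * n).choose n : ℚ) := by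
    intro n
    have := Nat.succ_mul_centralBinom_succ n
    simp only [Nat.centralBinom] at this
    exact_mod_cast this
  have key : ∀ m : ℕ, ((m : ℚ) + 1) ^ 3 * v (m + 1)
      + 4 * (m : ℚ) * (α₂ * m ^ 2 - 4 * β - α₂) * (if 1 ≤ m then v (m - 1) else 0)
      + 16 * α₁ * (m : ℚ) * ((m : ℚ) - 1) * ((m : ℚ) - 2)
        * (if 3 ≤ m then v (m - 3) else 0) = 0 := by
    intro m
    rcases Nat.even_or_odd m with ⟨n, hn⟩ | ⟨n, hn⟩
    · -- even case: all v's involved are at odd indices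
      subst hn
      have h1 : v (n + n + 1) = 0 := by have := hvodd n; rwa [two_mul] at this
      rw [h1]
      split_ifs with ha hb
      · obtain ⟨k, hk⟩ : ∃ k, n + n - 1 = 2 * k + 1 := ⟨n - 1, by omega⟩
        obtain ⟨l, hl⟩ : ∃ l, n + n - 3 = 2 * l + 1 := ⟨n - 2, by omega⟩
        rw [hk, hl, hvodd, hvodd]; ring
      · obtain ⟨k, hk⟩ : ∃ k, n + n - 1 = 2 * k + 1 := ⟨n - 1, by omega⟩
        rw [hk, hvodd]; ring
      · omega
      · ring
    · subst hn
      rcases n with _ | k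
      · -- m = 1
        norm_num
        have h2 : v 2 = 2 * u 1 := by
          have := hveven 1; norm_num [Nat.choose] at this; linarith
        have h0 : v 0 = u 0 := by have := hveven 0; norm_num at this; linarith
        have hr := hrec 0
        norm_num at hr
        rw [h2, h0]
        linarith
      · -- m = 2(k+1)+1 = 2k+3
        have hm : 2 * (k + 1) + 1 = 2 * k + 3 := by ring
        rw [hm]
        have e1 : 2 * k + 3 + 1 = 2 * (k + 2) := by ring
        have e2 : 2 * k + 3 - 1 = 2 * (k + 1) := by omega
        have e3 : 2 * k + 3 - 3 = 2 * k := by omega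
        rw [if_pos (by omega : 1 ≤ 2 * k + 3), if_pos (by omega : 3 ≤ 2 * k + 3),
          e1, e2, e3, hveven, hveven, hveven]
        have hr := hrec (k + 1)
        rw [if_pos (by omega : 1 ≤ k + 1)] at hr
        simp only [Nat.add_sub_cancel] at hr
        have hb1 := hcb (k + 1)
        have hb2 := hcb k
        push_cast at hb1 hb2 hr ⊢
        linear_combination 8 * ((k : ℚ) + 2) ^ 2 * u (k + 2) * hb1
          - 16 * α₁ * (2 * (k : ℚ) + 3) * ((k : ℚ) + 1) * u k * hb2
          + 16 * (2 * (k : ℚ) + 3) * ((2 * (k + 1)).choose (k + 1) : ℚ) * hr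
  refine ⟨key, ?_⟩
  ext n
  rcases n with _ | m
  · simp only [D3op, map_zero, zero_mul, zero_add, add_zero, mul_zero,
      eulerDplus_zero', mul_assoc, map_add, map_mul, coeff_C_mul]
    simp only [eulerDplus, eulerD, map_add, coeff_mk, coeff_C_mul, coeff_X_pow_mul']
    norm_num
  · rw [coeff_D3op_succ, map_zero]
    linear_combination key m
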